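/- Let i ∈ ℕ, let J be a finite set, let w : J → ℂ be injective with w(j) ≠ 0 for all j, and let m : J → ℕ with m(j) ≥ 1. Let F be a rational function (an element of RatFunc ℂ) such that the denominator of F divides X^i · ∏_{j∈J} (X − C(w j))^{m(j)}, and such that intDegree(F) ≤ −(i+1) (i.e. deg numerator + i + 1 ≤ deg denominator, so that z^{i+1}F(z) is regular at infinity). Then there exist scalars x_l(j) ∈ ℂ, for j ∈ J and 0 ≤ l ≤ m(j)−1, such that F = Σ_{j∈J} Σ_{l=0}^{m(j)−1} C(x_l(j)) / ( X^i · (X − C(w j))^{m(j)−l} ). (Lemma 5.3 (lem:partialfraction) of the paper.) -/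

import Mathlib

open Polynomial

lemma span_lemma {J : Type*} [DecidableEq J] (w : J → ℂ) (hw : Function.Injective w) (m : J → ℕ)
    (s : Finset J) :
    ∀ (p : ℂ[X]), p.degree < ((∑ j ∈ s, m j : ℕ) : WithBot ℕ) →
    ∃ c : J → ℕ → ℂ, p = ∑ j ∈ s, ∑ l ∈ Finset.range (m j),
      Polynomial.C (c j l) * (X - Polynomial.C (w j)) ^ l *
        ∏ k ∈ s.erase j, (X - Polynomial.C (w k)) ^ (m k) := by
  induction s using Finset.induction_on with
  | empty =>
    intro p hp
    simp only [Finset.sum_empty, Nat.cast_zero] at hp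
    have hp0 : p = 0 := degree_eq_bot.mp (Nat.WithBot.lt_zero_iff.mp hp)
    exact ⟨0, by simp [hp0]⟩
  | @insert j s hj ih =>
    intro p hp
    set A : ℂ[X] := (X - Polynomial.C (w j)) ^ (m j) with hA
    set Q : ℂ[X] := ∏ k ∈ s, (X - Polynomial.C (w k)) ^ (m k) with hQ
    have hAmonic : A.Monic := (monic_X_sub_C (w j)).pow _
    have hQmonic : Q.Monic := monic_prod_of_monic _ _ fun k _ => (monic_X_sub_C (w k)).pow _
    have hdegA : A.degree = (m j : WithBot ℕ) := by
      rw [degree_pow, degree_X_sub_C]; simp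
    have hdegQ : Q.degree = ((∑ k ∈ s, m k : ℕ) : WithBot ℕ) := by
      rw [degree_prod]
      rw [Nat.cast_sum]
      exact Finset.sum_congr rfl fun k _ => by rw [degree_pow, degree_X_sub_C]; simp
    have hcop : IsCoprime A Q := by
      apply IsCoprime.pow_left
      apply IsCoprime.prod_right
      intro k hk
      apply IsCoprime.pow_right
      exact Polynomial.pairwise_coprime_X_sub_C hw (fun h => hj (h ▸ hk) : j ≠ k)
    obtain ⟨a, b, hab⟩ := hcop
    -- p = (p*a)*A + (p*b)*Q ; divide p*b by A
    set r : ℂ[X] := (p * b) %ₘ A with hr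
    set q' : ℂ[X] := (p * b) /ₘ A with hq'
    have hdvd : p * b = r + A * q' := (modByMonic_add_div (p * b) A).symm
    have hdegr : r.degree < (m j : WithBot ℕ) := hdegA ▸ degree_modByMonic_lt _ hAmonic
    set p' : ℂ[X] := p * a + q' * Q with hp'
    have key : p = r * Q + A * p' := by
      have := hab
      calc p = p * (a * A + b * Q) := by rw [hab, mul_one]
        _ = (p * a) * A + (p * b) * Q := by ring
        _ = (p * a) * A + (r + A * q') * Q := by rw [← hdvd]
        _ = r * Q + A * (p * a + q' * Q) := by ring
    have hdegp' : p'.degree < ((∑ k ∈ s, m k : ℕ) : WithBot ℕ) := by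
      rcases eq_or_ne p' 0 with h | h
      · rw [h, degree_zero]; exact WithBot.bot_lt_coe _
      have h1 : (A * p').degree < ((m j : ℕ) : WithBot ℕ) + ((∑ k ∈ s, m k : ℕ) : WithBot ℕ) := by
        have : A * p' = p - r * Q := by rw [key]; ring
        rw [this]
        apply lt_of_le_of_lt (degree_sub_le _ _)
        apply max_lt
        · refine lt_of_lt_of_le hp ?_
          rw [Finset.sum_insert hj]
          rw [Nat.cast_add]
        · rw [degree_mul, hdegQ]
          exact WithBot.add_lt_add_right WithBot.coe_ne_bot hdegr
      rw [degree_mul, hdegA] at h1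
      exact lt_of_add_lt_add_left h1
    obtain ⟨c, hc⟩ := ih p' hdegp'
    -- expand r in powers of (X - w j)
    have hrsum : r = ∑ l ∈ Finset.range (m j),
        Polynomial.C ((Polynomial.taylor (w j) r).coeff l) * (X - Polynomial.C (w j)) ^ l := by
      conv_lhs => rw [← Polynomial.sum_taylor_eq r (w j)]
      rw [Polynomial.sum]
      apply Finset.sum_subset
      · intro l hl
        rw [Finset.mem_range]
        have := Polynomial.le_natDegree_of_mem_supp l hl
        rw [Polynomial.natDegree_taylor] at this
        rcases eq_or_ne r 0 with h0 | h0
        · simp [h0] at hl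
        · have := (Polynomial.degree_eq_natDegree h0) ▸ hdegr
          have : r.natDegree < m j := by exact_mod_cast this
          omega
      · intro l _ hl
        rw [Polynomial.notMem_support_iff] at hl
        simp [hl]
    set x : J → ℕ → ℂ := Function.update c j (fun l => (Polynomial.taylor (w j) r).coeff l) with hx
    have hxj : x j = fun l => (Polynomial.taylor (w j) r).coeff l := Function.update_self _ _ _
    have hxk : ∀ k, k ≠ j → x k = c k := fun k h => Function.update_of_ne h _ _
    refine ⟨x, ?_⟩
    have hxjl : ∀ l, x j l = (Polynomial.taylor (w j) r).coeff l := fun l => by rw [hxj]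
    have herase1 : (insert j s).erase j = s := Finset.erase_insert hj
    have herase2 : ∀ k ∈ s, (insert j s).erase k = insert j (s.erase k) := fun k hk =>
      Finset.erase_insert_of_ne (fun h => hj (h ▸ hk))
    rw [Finset.sum_insert hj]
    rw [herase1]
    have e1 : r * Q = ∑ l ∈ Finset.range (m j),
        Polynomial.C (x j l) * (X - Polynomial.C (w j)) ^ l * ∏ k ∈ s, (X - Polynomial.C (w k)) ^ (m k) := by
      rw [hrsum, Finset.sum_mul]
      refine Finset.sum_congr rfl fun l _ => ?_
      rw [hxjl l, hQ]
    have e2 : A * (∑ j ∈ s, ∑ l ∈ Finset.range (m j),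
          Polynomial.C (c j l) * (X - Polynomial.C (w j)) ^ l * ∏ k ∈ s.erase j, (X - Polynomial.C (w k)) ^ (m k))
        = ∑ k ∈ s, ∑ l ∈ Finset.range (m k),
          Polynomial.C (x k l) * (X - Polynomial.C (w k)) ^ l * ∏ k' ∈ (insert j s).erase k, (X - Polynomial.C (w k')) ^ (m k') := by
      rw [Finset.mul_sum]
      refine Finset.sum_congr rfl fun k hk => ?_
      rw [herase2 k hk, Finset.prod_insert (fun h => hj (Finset.mem_of_mem_erase h)), Finset.mul_sum]
      refine Finset.sum_congr rfl fun l _ => ?_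
      rw [hxk k (fun h => hj (h ▸ hk)), hA]
      ring
    rw [key, hc, e2, e1]

/-- Lemma 5.3 (lem:partialfraction) of the paper: let `F` be a rational function whose
denominator divides `X^i · Π_{j∈J} (X − w_j)^{m_j}` (with the `w_j` nonzero and pairwise
distinct and `m_j ≥ 1`), and which vanishes to order at least `i+1` at infinity
(`intDegree F ≤ −(i+1)`).  Then `F` admits the partial fraction decomposition
`F = Σ_{j∈J} Σ_{l=0}^{m_j−1} x_l(j) / ( X^i (X − w_j)^{m_j−l} )`. -/
theorem ratFunc_partial_fraction
    {J : Type*} [Fintype J] (i : ℕ)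
    (w : J → ℂ) (hw : Function.Injective w) (hw0 : ∀ j, w j ≠ 0)
    (m : J → ℕ) (hm : ∀ j, 1 ≤ m j)
    (F : RatFunc ℂ)
    (hden : F.denom ∣ Polynomial.X ^ i * ∏ j : J, (Polynomial.X - Polynomial.C (w j)) ^ m j)
    (hdeg : F.intDegree ≤ -(i + 1 : ℤ)) :
    ∃ x : J → ℕ → ℂ,
      F = ∑ j : J, ∑ l ∈ Finset.range (m j),
        RatFunc.C (x j l) / (RatFunc.X ^ i * (RatFunc.X - RatFunc.C (w j)) ^ (m j - l)) := by
  classical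
  set D : ℂ[X] := Polynomial.X ^ i * ∏ j : J, (Polynomial.X - Polynomial.C (w j)) ^ m j with hD
  have hDmonic : D.Monic :=
    (monic_X_pow i).mul (monic_prod_of_monic _ _ fun k _ => (monic_X_sub_C (w k)).pow _)
  obtain ⟨q, hq⟩ := hden
  have hD0 : D ≠ 0 := hDmonic.ne_zero
  have hq0 : q ≠ 0 := fun h => hD0 (by rw [hq, h, mul_zero])
  have hDdeg : D.natDegree = i + ∑ j : J, m j := by
    rw [hD, natDegree_mul (pow_ne_zero _ Polynomial.X_ne_zero)
      (Finset.prod_ne_zero_iff.mpr fun k _ => pow_ne_zero _ (X_sub_C_ne_zero _)),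
      natDegree_X_pow, natDegree_prod _ _ (fun k _ => pow_ne_zero _ (X_sub_C_ne_zero _))]
    congr 1
    exact Finset.sum_congr rfl fun k _ => by rw [natDegree_pow, natDegree_X_sub_C, mul_one]
  set p : ℂ[X] := F.num * q with hp
  have hdegp : p.degree < ((∑ j : J, m j : ℕ) : WithBot ℕ) := by
    rcases eq_or_ne F 0 with hF | hF
    · have : F.num = 0 := by rw [hF]; simp
      rw [hp, this, zero_mul, degree_zero]
      exact WithBot.bot_lt_coe _
    · have hnum0 : F.num ≠ 0 := RatFunc.num_ne_zero hF
      have hp0 : p ≠ 0 := mul_ne_zero hnum0 hq0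
      rw [Polynomial.degree_eq_natDegree hp0]
      have h1 : D.natDegree = F.denom.natDegree + q.natDegree := by
        rw [hq, natDegree_mul F.denom_ne_zero hq0]
      have h2 : (F.num.natDegree : ℤ) - F.denom.natDegree ≤ -(i + 1 : ℤ) := hdeg
      have h3 : p.natDegree = F.num.natDegree + q.natDegree :=
        natDegree_mul hnum0 hq0
      have : p.natDegree < ∑ j : J, m j := by omega
      exact_mod_cast this
  obtain ⟨c, hcp⟩ := span_lemma w hw m Finset.univ p hdegp
  refine ⟨c, ?_⟩
  set φ := algebraMap ℂ[X] (RatFunc ℂ) with hφ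
  have hφq : φ q ≠ 0 := by
    simpa [hφ, map_eq_zero_iff _ (RatFunc.algebraMap_injective ℂ)] using hq0
  have hFeq : F = φ p / φ D := by
    rw [hp, hq, map_mul, map_mul]
    rw [mul_div_mul_right _ _ hφq]
    exact (RatFunc.num_div_denom F).symm
  have hsub : ∀ k : J, RatFunc.X - RatFunc.C (w k) ≠ 0 := by
    intro k h
    have : φ (Polynomial.X - Polynomial.C (w k)) = 0 := by
      rw [map_sub, RatFunc.algebraMap_X, RatFunc.algebraMap_C]; exact h
    rw [map_eq_zero_iff _ (RatFunc.algebraMap_injective ℂ)] at this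
    exact X_sub_C_ne_zero (w k) this
  have hX0 : (RatFunc.X : RatFunc ℂ) ≠ 0 := RatFunc.X_ne_zero
  rw [hFeq, hcp, hD]
  rw [map_sum]
  rw [Finset.sum_div]
  refine Finset.sum_congr rfl fun j _ => ?_
  rw [map_sum, Finset.sum_div]
  refine Finset.sum_congr rfl fun l hl => ?_
  have hl' : l ≤ m j := le_of_lt (Finset.mem_range.mp hl)
  simp only [hφ, map_mul, map_pow, map_sub, map_prod, RatFunc.algebraMap_X,
    RatFunc.algebraMap_C]
  rw [← Finset.mul_prod_erase Finset.univ _ (Finset.mem_univ j)]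
  have hsplit : (RatFunc.X - RatFunc.C (w j)) ^ (m j) =
      (RatFunc.X - RatFunc.C (w j)) ^ (m j - l) * (RatFunc.X - RatFunc.C (w j)) ^ l := by
    rw [← pow_add]
    congr 1
    omega
  rw [hsplit]
  have hP0 : (∏ k ∈ Finset.univ.erase j, (RatFunc.X - RatFunc.C (w k)) ^ m k) ≠ 0 :=
    Finset.prod_ne_zero_iff.mpr fun k _ => pow_ne_zero _ (hsub k)
  rw [div_eq_div_iff
    (mul_ne_zero (pow_ne_zero _ hX0) (mul_ne_zero (mul_ne_zero (pow_ne_zero _ (hsub j))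
      (pow_ne_zero _ (hsub j))) hP0))
    (mul_ne_zero (pow_ne_zero _ hX0) (pow_ne_zero _ (hsub j)))]
  ring
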